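/- Let k ≥ 1, n ≥ 1, and let X be a C^k vector field defined on a neighborhood of 0 in ℝ^n with X(0) = 0 and DX(0) invertible. Then for every sufficiently small ε > 0 (in particular so small that X(x) ≠ 0 for 0 < ‖x‖ < ε): (i) the map (s,u) ↦ X(s·u)/‖X(s·u)‖, defined on (0,ε)×S^{n−1}, extends to a C^{k−1} map on (−ε,ε)×S^{n−1} whose value at (0,u) is DX(0)·u/‖DX(0)·u‖; (ii) the function (s,u) ↦ ‖X(s·u)‖/s, defined on (0,ε)×S^{n−1}, extends to a positive C^{k−1} function on (−ε,ε)×S^{n−1} whose value at (0,u) is ‖DX(0)·u‖; (iii) the map (s,u) ↦ s·u/‖X(s·u)‖, defined on (0,ε)×S^{n−1}, extends to a C^{k−1} map on (−ε,ε)×S^{n−1} whose value at (0,u) is u/‖DX(0)·u‖. -/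

import Mathlib

noncomputable section

open Set Metric intervalIntegral MeasureTheory

def myBump : ContDiffBump (1/2 : ℝ) := ⟨3/4, 1, by norm_num, by norm_num⟩

lemma myBump_rIn : myBump.rIn = 3/4 := rfl
lemma myBump_rOut : myBump.rOut = 1 := rfl

def theta (t : ℝ) : ℝ := ∫ s in (0:ℝ)..t, myBump s

lemma theta_hasDerivAt (t : ℝ) : HasDerivAt theta (myBump t) t :=
  intervalIntegral.integral_hasDerivAt_right
    (myBump.continuous.intervalIntegrable _ _)
    (myBump.continuous.stronglyMeasurableAtFilter _ _)
    myBump.continuous.continuousAt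

lemma theta_contDiff : ContDiff ℝ (⊤ : ℕ∞) theta := by
  rw [contDiff_infty_iff_deriv]
  refine ⟨fun t => (theta_hasDerivAt t).differentiableAt, ?_⟩
  have : deriv theta = fun t => myBump t := funext fun t => (theta_hasDerivAt t).deriv
  rw [this]
  exact myBump.contDiff

lemma theta_eq_id {t : ℝ} (ht : t ∈ Icc (0:ℝ) 1) : theta t = t := by
  have h1 : EqOn (fun s => myBump s) (fun _ => (1:ℝ)) (uIcc 0 t) := by
    intro s hs
    apply myBump.one_of_mem_closedBall
    rw [uIcc_of_le ht.1] at hs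
    rw [mem_closedBall, Real.dist_eq, myBump_rIn, abs_le]
    constructor <;> nlinarith [hs.1, hs.2, ht.1, ht.2]
  calc theta t = ∫ s in (0:ℝ)..t, (1:ℝ) := intervalIntegral.integral_congr h1
  _ = t := by simp

lemma integral_myBump_bounds {a b : ℝ} (hab : a ≤ b) :
    (∫ s in a..b, myBump s) ∈ Icc (0:ℝ) (b - a) := by
  constructor
  · exact intervalIntegral.integral_nonneg hab (fun x _ => myBump.nonneg)
  · have h := intervalIntegral.integral_mono_on (μ := MeasureTheory.volume)
      (f := fun s => (myBump s : ℝ)) (g := fun _ => (1:ℝ)) hab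
      (myBump.continuous.intervalIntegrable _ _)
      (intervalIntegrable_const) (fun x _ => myBump.le_one)
    simpa using h

lemma integral_myBump_zero_right {a b : ℝ} (ha : (3/2:ℝ) ≤ a) (hab : a ≤ b) :
    (∫ s in a..b, myBump s) = 0 := by
  have : EqOn (fun s => (myBump s : ℝ)) (fun _ => (0:ℝ)) (uIcc a b) := by
    intro s hs
    rw [uIcc_of_le hab] at hs
    apply myBump.zero_of_le_dist
    rw [Real.dist_eq, myBump_rOut]
    rw [abs_of_nonneg (by linarith [hs.1])]
    linarith [hs.1]
  calc (∫ s in a..b, myBump s) = ∫ s in a..b, (0:ℝ) := intervalIntegral.integral_congr this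
  _ = 0 := by simp

lemma integral_myBump_zero_left {a b : ℝ} (hb : b ≤ -(1/2:ℝ)) (hab : a ≤ b) :
    (∫ s in a..b, myBump s) = 0 := by
  have : EqOn (fun s => (myBump s : ℝ)) (fun _ => (0:ℝ)) (uIcc a b) := by
    intro s hs
    rw [uIcc_of_le hab] at hs
    apply myBump.zero_of_le_dist
    rw [Real.dist_eq, myBump_rOut]
    rw [abs_of_nonpos (by linarith [hs.2])]
    linarith [hs.2]
  calc (∫ s in a..b, myBump s) = ∫ s in a..b, (0:ℝ) := intervalIntegral.integral_congr this
  _ = 0 := by simp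

lemma theta_mem (t : ℝ) : theta t ∈ Icc (-(2:ℝ)) 2 := by
  have hadd : ∀ a b : ℝ, (∫ s in (0:ℝ)..a, myBump s) + ∫ s in a..b, myBump s
      = ∫ s in (0:ℝ)..b, myBump s := fun a b =>
    intervalIntegral.integral_add_adjacent_intervals
      (myBump.continuous.intervalIntegrable _ _) (myBump.continuous.intervalIntegrable _ _)
  rcases le_total 0 t with h0 | h0
  · rcases le_total t (3/2) with h1 | h1
    · have := integral_myBump_bounds h0
      unfold theta
      constructor <;> [linarith [this.1]; linarith [this.2]]
    · have h2 := hadd (3/2) t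
      have h3 := integral_myBump_zero_right le_rfl h1
      have h4 := integral_myBump_bounds (by norm_num : (0:ℝ) ≤ 3/2)
      unfold theta
      rw [← h2, h3]
      constructor <;> [linarith [h4.1]; linarith [h4.2]]
  · rcases le_total (-(1/2):ℝ) t with h1 | h1
    · have h2 := hadd t 0
      have h3 := integral_myBump_bounds h0
      unfold theta
      have : (∫ s in (0:ℝ)..t, myBump s) = - ∫ s in t..(0:ℝ), myBump s := by
        rw [intervalIntegral.integral_symm]
      rw [this]
      constructor <;> [linarith [h3.2]; linarith [h3.1]]
    · have h2 := hadd t (-(1/2))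
      have h3 := integral_myBump_zero_left le_rfl h1
      have h4 := integral_myBump_bounds (by norm_num : (-(1/2):ℝ) ≤ 0)
      -- theta t = ∫0..t = ∫0..(-(1/2)) + ∫(-(1/2))..t ; easier: ∫0..t = -(∫ t..0)
      have h5 := hadd (-(1/2)) 0
      have h6 : (∫ s in (0:ℝ)..t, myBump s) = (∫ s in (0:ℝ)..(-(1/2):ℝ), myBump s)
          + ∫ s in (-(1/2):ℝ)..t, myBump s := (hadd (-(1/2)) t).symm
      have h7 : (∫ s in (-(1/2):ℝ)..t, myBump s) = - ∫ s in t..(-(1/2):ℝ), myBump s := by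
        rw [intervalIntegral.integral_symm]
      have h8 : (∫ s in (0:ℝ)..(-(1/2):ℝ), myBump s) = - ∫ s in (-(1/2):ℝ)..(0:ℝ), myBump s := by
        rw [intervalIntegral.integral_symm]
      unfold theta
      rw [h6, h7, h3, h8]
      constructor <;> [linarith [h4.2]; linarith [h4.1]]

lemma paramCont {P F : Type} [NormedAddCommGroup P] [NormedSpace ℝ P]
    [NormedAddCommGroup F] [NormedSpace ℝ F] [CompleteSpace F]
    {B : Set P} (hB : IsOpen B) {φ : P × ℝ → F}
    (hφ : ContinuousOn φ (B ×ˢ univ)) :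
    ContinuousOn (fun p => ∫ t in (0:ℝ)..1, φ (p, t)) B := by
  have hopen : IsOpen (B ×ˢ (univ : Set ℝ)) := hB.prod isOpen_univ
  have hφat : ∀ q ∈ B ×ˢ (univ : Set ℝ), ContinuousAt φ q := fun q hq =>
    hφ.continuousAt (hopen.mem_nhds hq)
  classical
  intro p₀ hp₀
  apply ContinuousAt.continuousWithinAt
  obtain ⟨r, hr, hball⟩ := Metric.isOpen_iff.1 hB p₀ hp₀
  set χ : P → ℝ := fun p => max 0 (min 1 (2 - (4/r) * dist p p₀)) with hχdef
  have hχcont : Continuous χ := by fun_prop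
  have hχ1 : ∀ p, dist p p₀ ≤ r/4 → χ p = 1 := by
    intro p hp
    have h1 : (1:ℝ) ≤ 2 - (4/r) * dist p p₀ := by
      have : (4/r) * dist p p₀ ≤ (4/r) * (r/4) :=
        mul_le_mul_of_nonneg_left hp (by positivity)
      have h2 : (4/r) * (r/4) = 1 := by field_simp
      linarith
    simp only [hχdef]
    rw [min_eq_left h1, max_eq_right zero_le_one]
  have hχ0 : ∀ p, r/2 ≤ dist p p₀ → χ p = 0 := by
    intro p hp
    have h1 : 2 - (4/r) * dist p p₀ ≤ 0 := by
      have : (4/r) * (r/2) ≤ (4/r) * dist p p₀ :=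
        mul_le_mul_of_nonneg_left hp (by positivity)
      have h2 : (4/r) * (r/2) = 2 := by field_simp; ring
      linarith
    simp only [hχdef]
    rw [max_eq_left]
    exact min_le_of_right_le h1
  set ψ : P × ℝ → F := fun q => if q.1 ∈ ball p₀ r then χ q.1 • φ q else 0 with hψdef
  have hψcont : Continuous ψ := by
    rw [continuous_iff_continuousAt]
    intro q
    rcases lt_or_ge (dist q.1 p₀) (3*r/4) with hq | hq
    · -- near: ψ eventually equals χ • φ
      have hmem : (q.1, q.2) ∈ B ×ˢ (univ : Set ℝ) := ⟨hball (by simp [mem_ball]; linarith), trivial⟩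
      have hc : ContinuousAt (fun q' : P × ℝ => χ q'.1 • φ q') q := by
        exact (hχcont.continuousAt.comp continuousAt_fst).smul (hφat _ hmem)
      apply hc.congr
      have : {q' : P × ℝ | dist q'.1 p₀ < r} ∈ nhds q := by
        apply IsOpen.mem_nhds
        · exact isOpen_lt (by fun_prop) continuous_const
        · simp only [mem_setOf_eq]; linarith
      filter_upwards [this] with q' hq'
      simp only [hψdef, if_pos (mem_ball.2 hq')]
    · -- far: ψ eventually 0
      have : {q' : P × ℝ | r/2 < dist q'.1 p₀} ∈ nhds q := by
        apply IsOpen.mem_nhds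
        · exact isOpen_lt continuous_const (by fun_prop)
        · simp only [mem_setOf_eq]; linarith
      have hz : ψ q = 0 := by
        by_cases hin : q.1 ∈ ball p₀ r
        · simp only [hψdef, if_pos hin, hχ0 q.1 (by linarith), zero_smul]
        · simp only [hψdef, if_neg hin]
      rw [ContinuousAt, hz]
      apply Filter.Tendsto.congr' ?_ tendsto_const_nhds
      filter_upwards [this] with q' hq'
      by_cases hin : q'.1 ∈ ball p₀ r
      · simp only [hψdef, if_pos hin, hχ0 q'.1 hq'.le, zero_smul]
      · simp only [hψdef, if_neg hin]
  have hint : Continuous (fun p => ∫ t in (0:ℝ)..1, ψ (p, t)) := by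
    exact continuous_parametric_intervalIntegral_of_continuous'
      (f := fun p t => ψ (p, t)) (by exact hψcont) 0 1
  apply hint.continuousAt.congr
  have hmem : ball p₀ (r/4) ∈ nhds p₀ := ball_mem_nhds _ (by positivity)
  filter_upwards [hmem] with p hp
  apply intervalIntegral.integral_congr
  intro t _
  have hd : dist p p₀ ≤ r/4 := (mem_ball.1 hp).le
  have hin : p ∈ ball p₀ r := mem_ball.2 (by linarith)
  simp only [hψdef, if_pos hin, hχ1 p hd, one_smul]

lemma paramB {P : Type} [NormedAddCommGroup P] [NormedSpace ℝ P] [FiniteDimensional ℝ P] :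
    ∀ (m : ℕ) {F : Type} [NormedAddCommGroup F] [NormedSpace ℝ F] [FiniteDimensional ℝ F]
      {B : Set P} (_ : IsOpen B) {φ : P × ℝ → F}
      (_ : ContDiffOn ℝ m φ (B ×ˢ univ)),
      ContDiffOn ℝ m (fun p => ∫ t in (0:ℝ)..1, φ (p, t)) B
  | 0, F, _, _, _, B, hB, φ, hφ => by
      rw [show ((0:ℕ):WithTop ℕ∞) = 0 from rfl, contDiffOn_zero] at hφ ⊢
      exact paramCont hB hφ
  | (m+1), F, _, _, _, B, hB, φ, hφ => by
      have hopen : IsOpen (B ×ˢ (univ : Set ℝ)) := hB.prod isOpen_univ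
      -- the partial derivative in the P direction
      set ψ : P × ℝ → (P →L[ℝ] F) :=
        fun q => (fderiv ℝ φ q).comp (ContinuousLinearMap.inl ℝ P ℝ) with hψdef
      have hφ' : ContDiffOn ℝ m (fderiv ℝ φ) (B ×ˢ univ) := by
        apply hφ.fderiv_of_isOpen hopen
        exact_mod_cast le_rfl
      have hψ : ContDiffOn ℝ m ψ (B ×ˢ univ) := by
        have hclm : ContDiff ℝ m (fun L : (P × ℝ) →L[ℝ] F =>
            L.comp (ContinuousLinearMap.inl ℝ P ℝ)) :=
          ((ContinuousLinearMap.compL ℝ P (P × ℝ) F).flip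
            (ContinuousLinearMap.inl ℝ P ℝ)).contDiff
        exact hclm.comp_contDiffOn hφ'
      have hφdiff : ∀ q ∈ B ×ˢ (univ : Set ℝ), HasFDerivAt φ (fderiv ℝ φ q) q := by
        intro q hq
        have h1 : DifferentiableOn ℝ φ (B ×ˢ univ) := hφ.differentiableOn (by
          exact_mod_cast Nat.succ_ne_zero m)
        exact (h1.differentiableAt (hopen.mem_nhds hq)).hasFDerivAt
      have hslice : ∀ (p : P) (t : ℝ), p ∈ B → HasFDerivAt (fun p' => φ (p', t)) (ψ (p, t)) p := by
        intro p t hp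
        have h1 := hφdiff (p, t) ⟨hp, trivial⟩
        have h2 : HasFDerivAt (fun p' : P => (p', t))
            (ContinuousLinearMap.inl ℝ P ℝ) p := hasFDerivAt_prodMk_left p t
        exact h1.comp p h2
      have hcontφ : ContinuousOn φ (B ×ˢ univ) := hφ.continuousOn
      have hcontψ : ContinuousOn ψ (B ×ˢ univ) := hψ.continuousOn
      -- differentiability of the integral, with derivative the integral of ψ
      have key : ∀ p₀ ∈ B, HasFDerivAt (fun p => ∫ t in (0:ℝ)..1, φ (p, t))
          (∫ t in (0:ℝ)..1, ψ (p₀, t)) p₀ := by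
        intro p₀ hp₀
        obtain ⟨r, hr, hball⟩ := Metric.isOpen_iff.1 hB p₀ hp₀
        have hcompact : IsCompact (closedBall p₀ (r/2) ×ˢ Icc (0:ℝ) 1) :=
          (isCompact_closedBall _ _).prod isCompact_Icc
        have hsub : closedBall p₀ (r/2) ×ˢ Icc (0:ℝ) 1 ⊆ B ×ˢ univ := by
          intro q hq
          exact ⟨hball (lt_of_le_of_lt (mem_closedBall.1 hq.1) (by linarith)), trivial⟩
        obtain ⟨C, hC⟩ := hcompact.exists_bound_of_continuousOn (hcontψ.mono hsub)
        have hcslice : ∀ p ∈ B, Continuous (fun t => φ (p, t)) := by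
          intro p hp
          rw [continuous_iff_continuousAt]
          intro t
          exact (hcontφ.continuousAt (hopen.mem_nhds ⟨hp, trivial⟩)).comp
            (by fun_prop : Continuous (fun t : ℝ => (p, t))).continuousAt
        have hmeas : ∀ᶠ p in nhds p₀, AEStronglyMeasurable (fun t => φ (p, t))
            (volume.restrict (uIoc (0:ℝ) 1)) := by
          filter_upwards [hB.mem_nhds hp₀] with p hp
          exact ((hcslice p hp).aestronglyMeasurable).restrict
        have := intervalIntegral.hasFDerivAt_integral_of_dominated_of_fderiv_le
          (𝕜 := ℝ) (μ := volume) (F := fun p t => φ (p, t)) (F' := fun p t => ψ (p, t))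
          (x₀ := p₀) (a := 0) (b := 1) (bound := fun _ => C)
          (ball_mem_nhds p₀ (half_pos (half_pos hr))) hmeas
          ((hcslice p₀ hp₀).intervalIntegrable _ _)
          (by
            have : Continuous (fun t => ψ (p₀, t)) := by
              rw [continuous_iff_continuousAt]
              intro t
              exact (hcontψ.continuousAt (hopen.mem_nhds ⟨hp₀, trivial⟩)).comp
                (by fun_prop : Continuous (fun t : ℝ => (p₀, t))).continuousAt
            exact this.aestronglyMeasurable.restrict)
          (by
            apply Filter.Eventually.of_forall
            intro t ht p hp
            apply hC
            constructor
            · exact mem_closedBall.2 (le_trans (mem_ball.1 hp).le (by linarith))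
            · rcases ht with ht
              rw [uIoc_of_le (by norm_num : (0:ℝ) ≤ 1)] at ht
              exact ⟨ht.1.le, ht.2⟩)
          (intervalIntegrable_const)
          (by
            apply Filter.Eventually.of_forall
            intro t ht p hp
            apply hslice p t
            exact hball (lt_of_lt_of_le (mem_ball.1 hp) (by linarith)))
        exact this
      rw [show ((m+1 : ℕ) : WithTop ℕ∞) = (m : WithTop ℕ∞) + 1 by exact_mod_cast rfl,
        contDiffOn_succ_iff_fderiv_of_isOpen hB]
      refine ⟨fun p hp => ((key p hp).differentiableAt).differentiableWithinAt, ?_, ?_⟩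
      · intro h; exact absurd h (by simp)
      · have hIH : ContDiffOn ℝ m (fun p => ∫ t in (0:ℝ)..1, ψ (p, t)) B :=
          paramB m hB hψ
        apply hIH.congr
        intro p hp
        exact ((key p hp).fderiv)

/-- Hadamard-type factorization for a vector field along rays. -/
lemma exists_hadamard {n k : ℕ} (hk : 1 ≤ k)
    (X : EuclideanSpace ℝ (Fin n) → EuclideanSpace ℝ (Fin n))
    (U : Set (EuclideanSpace ℝ (Fin n))) (hU : IsOpen U)
    (h0U : (0 : EuclideanSpace ℝ (Fin n)) ∈ U)
    (hX : ContDiffOn ℝ k X U) (hX0 : X 0 = 0) :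
    ∃ (Bs : Set (ℝ × EuclideanSpace ℝ (Fin n)))
      (G : ℝ × EuclideanSpace ℝ (Fin n) → EuclideanSpace ℝ (Fin n)),
      IsOpen Bs ∧ (∀ u, ((0:ℝ), u) ∈ Bs) ∧ ContDiffOn ℝ (k-1) G Bs ∧
      (∀ p ∈ Bs, X (p.1 • p.2) = p.1 • G p) ∧
      (∀ u, G (0, u) = fderiv ℝ X 0 u) := by
  set m : ℕ := k - 1 with hm
  obtain ⟨c, hc, hcU⟩ := Metric.isOpen_iff.1 hU 0 h0U
  set B : Set (ℝ × EuclideanSpace ℝ (Fin n)) := {p | 2 * (|p.1| * ‖p.2‖) < c} with hBdef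
  have hB : IsOpen B := by
    have : Continuous fun p : ℝ × EuclideanSpace ℝ (Fin n) => 2 * (|p.1| * ‖p.2‖) := by fun_prop
    exact isOpen_lt this continuous_const
  set ι : (ℝ × EuclideanSpace ℝ (Fin n)) × ℝ → EuclideanSpace ℝ (Fin n) :=
    fun q => (theta q.2 * q.1.1) • q.1.2 with hιdef
  have hι : ContDiff ℝ m ι := by
    refine ContDiff.smul (f := fun q : (ℝ × EuclideanSpace ℝ (Fin n)) × ℝ => theta q.2 * q.1.1)
      (g := fun q : (ℝ × EuclideanSpace ℝ (Fin n)) × ℝ => q.1.2) ?_ ?_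
    · exact ((theta_contDiff.of_le (by exact_mod_cast (le_top : (m:ℕ∞) ≤ ⊤))).comp
        contDiff_snd).mul (contDiff_fst.fst)
    · exact contDiff_fst.snd
  have hmaps : MapsTo ι (B ×ˢ univ) U := by
    intro q hq
    apply hcU
    rw [mem_ball_zero_iff]
    have h1 : ‖ι q‖ = |theta q.2| * (|q.1.1| * ‖q.1.2‖) := by
      rw [hιdef]; simp [norm_smul, abs_mul, mul_assoc]
    have h2 : |theta q.2| ≤ 2 := by
      have := theta_mem q.2
      rw [abs_le]; exact ⟨this.1, this.2⟩
    have h3 : 2 * (|q.1.1| * ‖q.1.2‖) < c := hq.1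
    have h4 : (0:ℝ) ≤ |q.1.1| * ‖q.1.2‖ := by positivity
    calc ‖ι q‖ ≤ 2 * (|q.1.1| * ‖q.1.2‖) := by rw [h1]; exact mul_le_mul_of_nonneg_right h2 h4
    _ < c := h3
  have hfd : ContDiffOn ℝ m (fderiv ℝ X) U :=
    hX.fderiv_of_isOpen hU (by exact_mod_cast (by omega : m + 1 ≤ k))
  set φ : (ℝ × EuclideanSpace ℝ (Fin n)) × ℝ → EuclideanSpace ℝ (Fin n) :=
    fun q => (fderiv ℝ X (ι q)) q.1.2 with hφdef
  have hφ : ContDiffOn ℝ m φ (B ×ˢ univ) := by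
    apply ContDiffOn.clm_apply
    · exact hfd.comp hι.contDiffOn hmaps
    · exact (contDiff_fst.snd).contDiffOn
  set G : ℝ × EuclideanSpace ℝ (Fin n) → EuclideanSpace ℝ (Fin n) :=
    fun p => ∫ t in (0:ℝ)..1, φ (p, t) with hGdef
  have hG : ContDiffOn ℝ m G B := paramB m hB hφ
  have hmem : ∀ p : ℝ × EuclideanSpace ℝ (Fin n), p ∈ B →
      ∀ t : ℝ, |t| ≤ 2 → (t * p.1) • p.2 ∈ U := by
    intro p hp t ht
    apply hcU
    rw [mem_ball_zero_iff, norm_smul, Real.norm_eq_abs, abs_mul]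
    have h4 : (0:ℝ) ≤ |p.1| * ‖p.2‖ := by positivity
    calc |t| * |p.1| * ‖p.2‖ ≤ 2 * (|p.1| * ‖p.2‖) := by
          rw [mul_assoc]; exact mul_le_mul_of_nonneg_right ht h4
    _ < c := hp
  refine ⟨B, G, hB, ?_, hG, ?_, ?_⟩
  · intro u
    show 2 * (|(0:ℝ)| * ‖u‖) < c
    simpa using hc
  · rintro ⟨s, u⟩ hp
    show X (s • u) = s • G (s, u)
    have hin : ∀ t : ℝ, t ∈ uIcc (0:ℝ) 1 → t • (s • u) ∈ U := by
      intro t ht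
      rw [uIcc_of_le (by norm_num : (0:ℝ) ≤ 1)] at ht
      have h5 : t • (s • u) = (t * s) • u := (mul_smul t s u).symm
      rw [h5]
      exact hmem (s, u) hp t (by rw [abs_of_nonneg ht.1]; linarith [ht.2])
    have hder : ∀ t ∈ uIcc (0:ℝ) 1,
        HasDerivAt (fun t : ℝ => X (t • (s • u))) ((fderiv ℝ X (t • (s • u))) (s • u)) t := by
      intro t ht
      have hD : DifferentiableAt ℝ X (t • (s • u)) :=
        (hX.differentiableOn (by exact_mod_cast (show k ≠ 0 by omega))).differentiableAt
          (hU.mem_nhds (hin t ht))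
      have hinner : HasDerivAt (fun t : ℝ => t • (s • u)) (s • u) t := by
        simpa using (hasDerivAt_id t).smul_const (s • u)
      exact hD.hasFDerivAt.comp_hasDerivAt t hinner
    have hcont : ContinuousOn (fun t : ℝ => (fderiv ℝ X (t • (s • u))) (s • u))
        (uIcc (0:ℝ) 1) := by
      apply ContinuousOn.clm_apply _ continuousOn_const
      exact hfd.continuousOn.comp
        (by fun_prop : Continuous fun t : ℝ => t • (s • u)).continuousOn hin
    have hFTC := intervalIntegral.integral_eq_sub_of_hasDerivAt hder
      (hcont.intervalIntegrable)
    simp only [one_smul, zero_smul, hX0, sub_zero] at hFTC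
    rw [← hFTC, hGdef]
    rw [← intervalIntegral.integral_smul]
    apply intervalIntegral.integral_congr
    intro t ht
    rw [uIcc_of_le (by norm_num : (0:ℝ) ≤ 1)] at ht
    simp only [hφdef, hιdef]
    rw [theta_eq_id ht, mul_smul]
    rw [← ContinuousLinearMap.map_smul]
  · intro u
    have h5 : ∀ t : ℝ, φ ((0, u), t) = (fderiv ℝ X 0) u := by
      intro t
      simp only [hφdef, hιdef, mul_zero, zero_smul]
    show (∫ t in (0:ℝ)..1, φ ((0, u), t)) = (fderiv ℝ X 0) u
    simp only [h5]
    simp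

/-- Proposition 2.2 of the paper: let `X` be a `C^k` vector field on a
neighborhood of `0` in `ℝ^n` with `X(0) = 0` and `DX(0)` invertible. Then for every
sufficiently small `ε > 0` (in particular with `X` non-vanishing on the punctured ball):
(i) `(s,u) ↦ X(s·u)/‖X(s·u)‖`, (ii) `(s,u) ↦ ‖X(s·u)‖/s` and
(iii) `(s,u) ↦ s·u/‖X(s·u)‖`, defined on `(0,ε) × S^{n−1}`, extend to `C^{k−1}` maps on
`(−ε,ε) × S^{n−1}` with values `DX(0)u/‖DX(0)u‖`, `‖DX(0)u‖` and `u/‖DX(0)u‖` at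
`(0,u)` respectively. -/
theorem statement7 {n k : ℕ} (hk : 1 ≤ k) (hn : 1 ≤ n)
    (X : EuclideanSpace ℝ (Fin n) → EuclideanSpace ℝ (Fin n))
    (U : Set (EuclideanSpace ℝ (Fin n))) (hU : IsOpen U)
    (h0U : (0 : EuclideanSpace ℝ (Fin n)) ∈ U)
    (hX : ContDiffOn ℝ k X U) (hX0 : X 0 = 0)
    (hDX : Function.Bijective (fderiv ℝ X 0)) :
    ∃ ε₀ > 0, ∀ ε : ℝ, 0 < ε → ε ≤ ε₀ →
      (∀ x : EuclideanSpace ℝ (Fin n), 0 < ‖x‖ → ‖x‖ < ε → X x ≠ 0) ∧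
      -- (i)
      (∃ (O : Set (ℝ × EuclideanSpace ℝ (Fin n)))
         (g : ℝ × EuclideanSpace ℝ (Fin n) → EuclideanSpace ℝ (Fin n)),
        IsOpen O ∧
        Set.Ioo (-ε) ε ×ˢ sphere (0 : EuclideanSpace ℝ (Fin n)) 1 ⊆ O ∧
        ContDiffOn ℝ (k - 1) g O ∧
        (∀ s ∈ Set.Ioo (0:ℝ) ε, ∀ u ∈ sphere (0 : EuclideanSpace ℝ (Fin n)) 1,
          g (s, u) = ‖X (s • u)‖⁻¹ • X (s • u)) ∧
        (∀ u ∈ sphere (0 : EuclideanSpace ℝ (Fin n)) 1,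
          g (0, u) = ‖fderiv ℝ X 0 u‖⁻¹ • fderiv ℝ X 0 u)) ∧
      -- (ii)
      (∃ (O : Set (ℝ × EuclideanSpace ℝ (Fin n)))
         (g : ℝ × EuclideanSpace ℝ (Fin n) → ℝ),
        IsOpen O ∧
        Set.Ioo (-ε) ε ×ˢ sphere (0 : EuclideanSpace ℝ (Fin n)) 1 ⊆ O ∧
        ContDiffOn ℝ (k - 1) g O ∧
        (∀ p ∈ Set.Ioo (-ε) ε ×ˢ sphere (0 : EuclideanSpace ℝ (Fin n)) 1, 0 < g p) ∧
        (∀ s ∈ Set.Ioo (0:ℝ) ε, ∀ u ∈ sphere (0 : EuclideanSpace ℝ (Fin n)) 1,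
          g (s, u) = ‖X (s • u)‖ / s) ∧
        (∀ u ∈ sphere (0 : EuclideanSpace ℝ (Fin n)) 1,
          g (0, u) = ‖fderiv ℝ X 0 u‖)) ∧
      -- (iii)
      (∃ (O : Set (ℝ × EuclideanSpace ℝ (Fin n)))
         (g : ℝ × EuclideanSpace ℝ (Fin n) → EuclideanSpace ℝ (Fin n)),
        IsOpen O ∧
        Set.Ioo (-ε) ε ×ˢ sphere (0 : EuclideanSpace ℝ (Fin n)) 1 ⊆ O ∧
        ContDiffOn ℝ (k - 1) g O ∧
        (∀ s ∈ Set.Ioo (0:ℝ) ε, ∀ u ∈ sphere (0 : EuclideanSpace ℝ (Fin n)) 1,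
          g (s, u) = ‖X (s • u)‖⁻¹ • (s • u)) ∧
        (∀ u ∈ sphere (0 : EuclideanSpace ℝ (Fin n)) 1,
          g (0, u) = ‖fderiv ℝ X 0 u‖⁻¹ • u)) := by
  obtain ⟨Bs, G, hB, h0B, hG, hkey, hG0⟩ := exists_hadamard hk X U hU h0U hX hX0
  set m : ℕ := k - 1 with hm
  -- the good open set
  set O : Set (ℝ × EuclideanSpace ℝ (Fin n)) := {p | p ∈ Bs ∧ G p ≠ 0} with hOdef
  have hOB : O ⊆ Bs := fun p hp => hp.1
  have hOopen : IsOpen O := by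
    rw [isOpen_iff_mem_nhds]
    rintro p ⟨hpB, hpG⟩
    have hat : ContinuousAt G p := (hG.continuousOn).continuousAt (hB.mem_nhds hpB)
    have h1 : {x | G x ≠ 0} ∈ nhds p :=
      hat.preimage_mem_nhds (isOpen_compl_singleton.mem_nhds hpG)
    exact Filter.inter_mem (hB.mem_nhds hpB) h1
  have hKsub : ({0} : Set ℝ) ×ˢ sphere (0 : EuclideanSpace ℝ (Fin n)) 1 ⊆ O := by
    rintro ⟨s, u⟩ ⟨hs, hu⟩
    rw [mem_singleton_iff] at hs
    subst hs
    have hu1 : ‖u‖ = 1 := by rwa [mem_sphere_zero_iff_norm] at hu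
    refine ⟨h0B u, ?_⟩
    rw [hG0]
    intro h
    have h2 : u = 0 := hDX.injective (by rw [h, map_zero])
    rw [h2] at hu1; simp at hu1
  have hKcomp : IsCompact (({0} : Set ℝ) ×ˢ sphere (0 : EuclideanSpace ℝ (Fin n)) 1) :=
    isCompact_singleton.prod (isCompact_sphere 0 1)
  obtain ⟨δ, hδ, hthick⟩ := hKcomp.exists_thickening_subset_open hOopen hKsub
  have hsub : ∀ s : ℝ, |s| < δ/2 → ∀ u ∈ sphere (0 : EuclideanSpace ℝ (Fin n)) 1,
      (s, u) ∈ O := by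
    intro s hs u hu
    apply hthick
    rw [mem_thickening_iff]
    refine ⟨(0, u), ⟨mem_singleton _, hu⟩, ?_⟩
    rw [Prod.dist_eq]
    simp only [dist_self]
    rw [Real.dist_eq, sub_zero]
    calc max |s| 0 ≤ |s| := by simp [abs_nonneg]
    _ < δ := by linarith
  refine ⟨δ/2, by positivity, ?_⟩
  intro ε hε hεle
  have hIoo : Set.Ioo (-ε) ε ×ˢ sphere (0 : EuclideanSpace ℝ (Fin n)) 1 ⊆ O := by
    rintro ⟨s, u⟩ ⟨hs, hu⟩
    exact hsub s (by rw [abs_lt]; exact ⟨by linarith [hs.1], by linarith [hs.2]⟩) u hu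
  have hval : ∀ s : ℝ, 0 < s → ∀ u : EuclideanSpace ℝ (Fin n), (s, u) ∈ O →
      X (s • u) = s • G (s, u) ∧ ‖X (s • u)‖ = s * ‖G (s, u)‖ := by
    intro s hs u hu
    have h1 := hkey (s, u) (hOB hu)
    refine ⟨h1, ?_⟩
    rw [show X ((s,u).1 • (s,u).2) = X (s • u) from rfl] at h1
    rw [h1, norm_smul, Real.norm_eq_abs, abs_of_pos hs]
  constructor
  · -- X nonvanishing
    intro x hx0 hxε
    have hxne : x ≠ 0 := by intro h; rw [h] at hx0; simp at hx0
    set u : EuclideanSpace ℝ (Fin n) := ‖x‖⁻¹ • x with hu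
    have hu1 : u ∈ sphere (0 : EuclideanSpace ℝ (Fin n)) 1 := by
      rw [mem_sphere_zero_iff_norm]
      exact norm_smul_inv_norm hxne
    have hxu : ‖x‖ • u = x := by
      rw [hu, smul_smul, mul_inv_cancel₀ (norm_ne_zero_iff.2 hxne), one_smul]
    have hmemO : (‖x‖, u) ∈ O := hsub ‖x‖ (by rw [abs_of_pos hx0]; linarith) u hu1
    have h6 := (hval ‖x‖ hx0 u hmemO).1
    rw [hxu] at h6
    rw [h6]
    exact smul_ne_zero (by positivity) hmemO.2
  have hsmooth : ∀ p ∈ O, ContDiffWithinAt ℝ m G O p := by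
    intro p hp
    exact (hG p (hOB hp)).mono hOB
  refine ⟨?_, ?_, ?_⟩
  · -- (i)
    refine ⟨O, fun p => ‖G p‖⁻¹ • G p, hOopen, hIoo, ?_, ?_, ?_⟩
    · intro p hp
      have h1 := hsmooth p hp
      exact ((h1.norm ℝ hp.2).inv (norm_ne_zero_iff.2 hp.2)).smul h1
    · intro s hs u hu
      have hmemO : (s, u) ∈ O := hIoo ⟨⟨by linarith [hs.1, hε], hs.2⟩, hu⟩
      obtain ⟨h1, h2⟩ := hval s hs.1 u hmemO
      show ‖G (s, u)‖⁻¹ • G (s, u) = ‖X (s • u)‖⁻¹ • X (s • u)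
      rw [h2, h1, smul_smul]
      congr 1
      rw [mul_inv, mul_comm s⁻¹, mul_assoc, inv_mul_cancel₀ (ne_of_gt hs.1), mul_one]
    · intro u hu
      show ‖G (0, u)‖⁻¹ • G (0, u) = _
      rw [hG0]
  · -- (ii)
    refine ⟨O, fun p => ‖G p‖, hOopen, hIoo, ?_, ?_, ?_, ?_⟩
    · intro p hp
      exact (hsmooth p hp).norm ℝ hp.2
    · intro p hp
      exact norm_pos_iff.2 (hIoo hp).2
    · intro s hs u hu
      have hmemO : (s, u) ∈ O := hIoo ⟨⟨by linarith [hs.1, hε], hs.2⟩, hu⟩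
      obtain ⟨h1, h2⟩ := hval s hs.1 u hmemO
      show ‖G (s, u)‖ = ‖X (s • u)‖ / s
      rw [h2, mul_comm, mul_div_assoc, div_self (ne_of_gt hs.1), mul_one]
    · intro u hu
      show ‖G (0, u)‖ = _
      rw [hG0]
  · -- (iii)
    refine ⟨O, fun p => ‖G p‖⁻¹ • p.2, hOopen, hIoo, ?_, ?_, ?_⟩
    · intro p hp
      have h1 := hsmooth p hp
      exact ((h1.norm ℝ hp.2).inv (norm_ne_zero_iff.2 hp.2)).smul
        contDiff_snd.contDiffWithinAt
    · intro s hs u hu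
      have hmemO : (s, u) ∈ O := hIoo ⟨⟨by linarith [hs.1, hε], hs.2⟩, hu⟩
      obtain ⟨h1, h2⟩ := hval s hs.1 u hmemO
      show ‖G (s, u)‖⁻¹ • u = ‖X (s • u)‖⁻¹ • s • u
      rw [h2, smul_smul]
      congr 1
      rw [mul_inv, mul_comm s⁻¹, mul_assoc, inv_mul_cancel₀ (ne_of_gt hs.1), mul_one]
    · intro u hu
      show ‖G (0, u)‖⁻¹ • u = _
      rw [hG0]


end
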